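/- Let (P_n) and (Q_n) be sequences of probability measures on measurable spaces (X_n, B_n) and a_n ↓ 0. Suppose that for every ε > 0 there exists δ > 0 such that for all sufficiently large n, Q_n(dP_n/dQ_n < δ·a_n) < ε. Then Q_n is a_n-remotely contiguous with respect to P_n: for any sequence of measurable functions φ_n : X_n → [0,1], if ∫φ_n dP_n = o(a_n) then ∫φ_n dQ_n = o(1). -/

import Mathlib

open MeasureTheory Filter Asymptotics

theorem remote_contiguity_of_lr_tail_bound
    {X : ℕ → Type*} [∀ n, MeasurableSpace (X n)]
    (ν : ∀ n, Measure (X n)) [∀ n, SigmaFinite (ν n)]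
    (p q : ∀ n, X n → ℝ)
    (hpm : ∀ n, Measurable (p n)) (hqm : ∀ n, Measurable (q n))
    (hp0 : ∀ n x, 0 ≤ p n x) (hq0 : ∀ n x, 0 ≤ q n x)
    (P Q : ∀ n, Measure (X n))
    [∀ n, IsProbabilityMeasure (P n)] [∀ n, IsProbabilityMeasure (Q n)]
    (hP : ∀ n, P n = (ν n).withDensity (fun x => ENNReal.ofReal (p n x)))
    (hQ : ∀ n, Q n = (ν n).withDensity (fun x => ENNReal.ofReal (q n x)))
    (a : ℕ → ℝ) (ha0 : ∀ n, 0 < a n) (haanti : Antitone a)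
    (halim : Tendsto a atTop (nhds 0))
    (h : ∀ ε > (0:ℝ), ∃ δ > (0:ℝ), ∀ᶠ n in atTop,
      Q n {x | p n x < δ * a n * q n x} < ENNReal.ofReal ε)
    (φ : ∀ n, X n → ℝ) (hφm : ∀ n, Measurable (φ n))
    (hφ01 : ∀ n x, φ n x ∈ Set.Icc (0:ℝ) 1)
    (hPφ : (fun n => ∫ x, φ n x ∂(P n)) =o[atTop] a) :
    Tendsto (fun n => ∫ x, φ n x ∂(Q n)) atTop (nhds 0) := by
  have hφ0 : ∀ n x, 0 ≤ φ n x := fun n x => (hφ01 n x).1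
  have hφ1 : ∀ n x, φ n x ≤ 1 := fun n x => (hφ01 n x).2
  have hIQ : ∀ n, ∫ x, φ n x ∂(Q n) = (∫⁻ x, ENNReal.ofReal (φ n x) ∂(Q n)).toReal := fun n =>
    integral_eq_lintegral_of_nonneg_ae (Filter.Eventually.of_forall (hφ0 n))
      ((hφm n).aestronglyMeasurable)
  have hIP : ∀ n, ∫ x, φ n x ∂(P n) = (∫⁻ x, ENNReal.ofReal (φ n x) ∂(P n)).toReal := fun n =>
    integral_eq_lintegral_of_nonneg_ae (Filter.Eventually.of_forall (hφ0 n))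
      ((hφm n).aestronglyMeasurable)
  have hPle : ∀ n, ∫⁻ x, ENNReal.ofReal (φ n x) ∂(P n) ≤ 1 := by
    intro n
    calc ∫⁻ x, ENNReal.ofReal (φ n x) ∂(P n) ≤ ∫⁻ _, 1 ∂(P n) :=
          lintegral_mono fun x => ENNReal.ofReal_le_one.mpr (hφ1 n x)
      _ = 1 := by simp
  have hQ0' : ∀ n, 0 ≤ ∫ x, φ n x ∂(Q n) := fun n => integral_nonneg (hφ0 n)
  have hP0' : ∀ n, 0 ≤ ∫ x, φ n x ∂(P n) := fun n => integral_nonneg (hφ0 n)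
  -- key inequality
  have key : ∀ δ : ℝ, 0 < δ → ∀ n, ∫ x, φ n x ∂(Q n) ≤
      (Q n {x | p n x < δ * a n * q n x}).toReal + (δ * a n)⁻¹ * ∫ x, φ n x ∂(P n) := by
    intro δ hδ n
    set c : ℝ := δ * a n with hc
    have hcpos : 0 < c := mul_pos hδ (ha0 n)
    set S : Set (X n) := {x | p n x < c * q n x} with hS
    have hSm : MeasurableSet S := measurableSet_lt (hpm n) (measurable_const.mul (hqm n))
    have hqem : Measurable (fun x => ENNReal.ofReal (q n x)) := (hqm n).ennreal_ofReal
    have hpem : Measurable (fun x => ENNReal.ofReal (p n x)) := (hpm n).ennreal_ofReal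
    have hφem : Measurable (fun x => ENNReal.ofReal (φ n x)) := (hφm n).ennreal_ofReal
    -- pointwise bound
    have ptw : ∀ x, ENNReal.ofReal (q n x) * ENNReal.ofReal (φ n x) ≤
        S.indicator (fun x => ENNReal.ofReal (q n x)) x +
          ENNReal.ofReal c⁻¹ * (ENNReal.ofReal (p n x) * ENNReal.ofReal (φ n x)) := by
      intro x
      by_cases hx : x ∈ S
      · refine le_trans ?_ le_self_add
        rw [Set.indicator_of_mem hx]
        calc ENNReal.ofReal (q n x) * ENNReal.ofReal (φ n x)
            ≤ ENNReal.ofReal (q n x) * 1 :=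
              mul_le_mul_right (ENNReal.ofReal_le_one.mpr (hφ1 n x)) _
          _ = ENNReal.ofReal (q n x) := mul_one _
      · rw [Set.indicator_of_notMem hx, zero_add]
        have hqp : q n x ≤ c⁻¹ * p n x := by
          have : c * q n x ≤ p n x := not_lt.mp hx
          rw [le_inv_mul_iff₀ hcpos] ; exact this
        calc ENNReal.ofReal (q n x) * ENNReal.ofReal (φ n x)
            ≤ ENNReal.ofReal (c⁻¹ * p n x) * ENNReal.ofReal (φ n x) :=
              mul_le_mul_left (ENNReal.ofReal_le_ofReal hqp) _
          _ = ENNReal.ofReal c⁻¹ * (ENNReal.ofReal (p n x) * ENNReal.ofReal (φ n x)) := by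
              rw [ENNReal.ofReal_mul (inv_nonneg.mpr hcpos.le), mul_assoc]
    -- lintegral bound
    have hQlin : ∫⁻ x, ENNReal.ofReal (φ n x) ∂(Q n)
        = ∫⁻ x, ENNReal.ofReal (q n x) * ENNReal.ofReal (φ n x) ∂(ν n) := by
      rw [hQ n, lintegral_withDensity_eq_lintegral_mul _ hqem hφem]; rfl
    have hPlin : ∫⁻ x, ENNReal.ofReal (φ n x) ∂(P n)
        = ∫⁻ x, ENNReal.ofReal (p n x) * ENNReal.ofReal (φ n x) ∂(ν n) := by
      rw [hP n, lintegral_withDensity_eq_lintegral_mul _ hpem hφem]; rfl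
    have hQS : Q n S = ∫⁻ x, S.indicator (fun x => ENNReal.ofReal (q n x)) x ∂(ν n) := by
      rw [hQ n, withDensity_apply _ hSm]
      exact (lintegral_indicator hSm _).symm
    have main : ∫⁻ x, ENNReal.ofReal (φ n x) ∂(Q n) ≤
        Q n S + ENNReal.ofReal c⁻¹ * ∫⁻ x, ENNReal.ofReal (φ n x) ∂(P n) := by
      rw [hQlin, hPlin, hQS]
      calc ∫⁻ x, ENNReal.ofReal (q n x) * ENNReal.ofReal (φ n x) ∂(ν n)
          ≤ ∫⁻ x, (S.indicator (fun x => ENNReal.ofReal (q n x)) x +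
              ENNReal.ofReal c⁻¹ * (ENNReal.ofReal (p n x) * ENNReal.ofReal (φ n x))) ∂(ν n) :=
            lintegral_mono ptw
        _ = (∫⁻ x, S.indicator (fun x => ENNReal.ofReal (q n x)) x ∂(ν n)) +
            ENNReal.ofReal c⁻¹ * ∫⁻ x, ENNReal.ofReal (p n x) * ENNReal.ofReal (φ n x) ∂(ν n) := by
            rw [lintegral_add_left (hqem.indicator hSm), lintegral_const_mul (f := fun x => ENNReal.ofReal (p n x) * ENNReal.ofReal (φ n x)) _ (hpem.mul hφem)]
    -- pass to toReal
    have hQSne : Q n S ≠ ⊤ := (measure_lt_top _ _).ne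
    have hinvne : ENNReal.ofReal c⁻¹ ≠ ⊤ := ENNReal.ofReal_ne_top
    have hPne : ∫⁻ x, ENNReal.ofReal (φ n x) ∂(P n) ≠ ⊤ :=
      ne_top_of_le_ne_top ENNReal.one_ne_top (hPle n)
    have := ENNReal.toReal_mono (by
        exact ENNReal.add_ne_top.mpr ⟨hQSne, ENNReal.mul_ne_top hinvne hPne⟩) main
    rw [ENNReal.toReal_add hQSne (ENNReal.mul_ne_top hinvne hPne), ENNReal.toReal_mul,
      ENNReal.toReal_ofReal (inv_nonneg.mpr hcpos.le)] at this
    rw [hIQ n, hIP n]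
    exact this
  -- conclusion
  rw [NormedAddCommGroup.tendsto_nhds_zero]
  intro ε hε
  obtain ⟨δ, hδ, hev⟩ := h (ε / 2) (half_pos hε)
  have hsmall : ∀ᶠ n in atTop, ‖∫ x, φ n x ∂(P n)‖ ≤ ε / 2 * δ * ‖a n‖ :=
    hPφ.bound (by positivity)
  filter_upwards [hev, hsmall] with n h1 h2
  have h2' : ∫ x, φ n x ∂(P n) ≤ ε / 2 * δ * a n := by
    rw [Real.norm_eq_abs, abs_of_nonneg (hP0' n), Real.norm_eq_abs,
      abs_of_nonneg (ha0 n).le] at h2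
    exact h2
  have hQS : (Q n {x | p n x < δ * a n * q n x}).toReal < ε / 2 := by
    rw [← ENNReal.lt_ofReal_iff_toReal_lt (measure_lt_top _ _).ne]
    exact h1
  have hca : 0 < δ * a n := mul_pos hδ (ha0 n)
  have hterm2 : (δ * a n)⁻¹ * ∫ x, φ n x ∂(P n) ≤ ε / 2 := by
    rw [inv_mul_le_iff₀ hca]
    calc ∫ x, φ n x ∂(P n) ≤ ε / 2 * δ * a n := h2'
      _ = δ * a n * (ε / 2) := by ring
  have hbound := key δ hδ n
  have : ∫ x, φ n x ∂(Q n) < ε := by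
    calc ∫ x, φ n x ∂(Q n)
        ≤ (Q n {x | p n x < δ * a n * q n x}).toReal + (δ * a n)⁻¹ * ∫ x, φ n x ∂(P n) := hbound
      _ < ε / 2 + ε / 2 := by exact add_lt_add_of_lt_of_le hQS hterm2
      _ = ε := add_halves ε
  rw [Real.norm_eq_abs, abs_of_nonneg (hQ0' n)]
  exact this
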